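/- The n-partite Popescu–Rohrlich box, defined by P(a|x) = 2^{-(n-1)} if ⊕_{i=1}^n a_i = ∏_{i=1}^n x_i and 0 otherwise, is an extremal point of the polytope of n-partite non-signaling boxes with binary inputs and outputs: if P = εP¹ + (1−ε)P² with 0 < ε < 1 and P¹, P² non-signaling, then P¹ = P² = P. -/

import Mathlib

open Finset

noncomputable section

/-- An `n`-partite box: conditional distribution `P x a` of outputs `a` given inputs `x`,
with binary inputs/outputs modeled as `ZMod 2`. -/
abbrev Box (n : ℕ) := (Fin n → ZMod 2) → (Fin n → ZMod 2) → ℝ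

/-- Non-signaling: for every subset `S` of parties, the marginal of the outputs in `S`
depends only on the inputs in `S`. -/
def IsNonSignaling {n : ℕ} (P : Box n) : Prop :=
  ∀ (S : Finset (Fin n)) (x x' : Fin n → ZMod 2), (∀ i ∈ S, x i = x' i) →
    ∀ aS : Fin n → ZMod 2,
      ∑ a ∈ Finset.univ.filter (fun a : Fin n → ZMod 2 => ∀ i ∈ S, a i = aS i), P x a =
      ∑ a ∈ Finset.univ.filter (fun a : Fin n → ZMod 2 => ∀ i ∈ S, a i = aS i), P x' a

/-- A non-signaling box: nonnegative, normalized, non-signaling. -/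
def IsNSBox {n : ℕ} (P : Box n) : Prop :=
  (∀ x a, 0 ≤ P x a) ∧ (∀ x, ∑ a, P x a = 1) ∧ IsNonSignaling P

/-- The full-correlation box associated to the Boolean function `f`. -/
def FCB (n : ℕ) (f : (Fin n → ZMod 2) → ZMod 2) : Box n :=
  fun x a => if (∑ i, a i) = f x then ((2:ℝ)^(n-1))⁻¹ else 0

/-- The `n`-partite Popescu–Rohrlich box. -/
def nPR (n : ℕ) : Box n := FCB n (fun x => ∏ i, x i)

/-- The local box with uniformly correlated outputs of even parity. -/
def Pc (n : ℕ) : Box n := FCB n (fun _ => 0)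

/-- Extremality in the non-signaling polytope. -/
def IsExtremalNS {n : ℕ} (P : Box n) : Prop :=
  IsNSBox P ∧ ∀ (ε : ℝ) (P1 P2 : Box n), 0 < ε → ε < 1 → IsNSBox P1 → IsNSBox P2 →
    (∀ x a, P x a = ε * P1 x a + (1 - ε) * P2 x a) → P1 = P ∧ P2 = P

/-- Locality: convex combination of products of single-party conditional distributions. -/
def IsLocal {n : ℕ} (P : Box n) : Prop :=
  ∃ (m : ℕ) (q : Fin m → ℝ) (s : Fin m → Fin n → ZMod 2 → ZMod 2 → ℝ),
    (∀ r, 0 ≤ q r) ∧ (∑ r, q r = 1) ∧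
    (∀ r i xi ai, 0 ≤ s r i xi ai) ∧ (∀ r i xi, ∑ ai : ZMod 2, s r i xi ai = 1) ∧
    ∀ x a, P x a = ∑ r, q r * ∏ i, s r i (x i) (a i)

/-- `f` is affine: a constant XORed with a subset of the input bits. -/
def IsAffine {n : ℕ} (f : (Fin n → ZMod 2) → ZMod 2) : Prop :=
  ∃ (c : ZMod 2) (S : Finset (Fin n)), ∀ x, f x = c + ∑ i ∈ S, x i

/-- L¹ distance between boxes. -/
def L1dist {n : ℕ} (P Q : Box n) : ℝ := ∑ x, ∑ a, |P x a - Q x a|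

lemma z2a (c u : ZMod 2) : c + u + (u + 1) = c + 1 := by revert c u; decide
lemma z2b (c u : ZMod 2) : c + 1 + u + (u + 1) = c := by revert c u; decide
lemma z2d (u t : ZMod 2) : u + t + t = u := by revert u t; decide
lemma z2c (u : ZMod 2) : u + 1 + 1 = u := by revert u; decide

lemma sum_upd {n : ℕ} (a : Fin n → ZMod 2) (i : Fin n) (v : ZMod 2) :
    ∑ j, Function.update a i v j = (∑ j, a j) + a i + v := by
  rw [Finset.sum_update_of_mem (Finset.mem_univ i),
    ← Finset.add_sum_erase _ a (Finset.mem_univ i)]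
  simp only [Finset.erase_eq]
  generalize ∑ x ∈ Finset.univ \ {i}, a x = s
  generalize a i = u
  revert s u v
  decide

lemma filter_pair {n : ℕ} (i : Fin n) (b aS : Fin n → ZMod 2)
    (hbs : ∀ j, j ≠ i → b j = aS j) :
    Finset.univ.filter (fun c : Fin n → ZMod 2 => ∀ j ∈ Finset.univ.erase i, c j = aS j) =
      {b, Function.update b i (b i + 1)} := by
  ext c
  simp only [Finset.mem_filter, Finset.mem_univ, true_and, Finset.mem_insert,
    Finset.mem_singleton]
  constructor
  · intro h
    have hoff : ∀ j, j ≠ i → c j = b j := fun j hj =>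
      (h j (Finset.mem_erase.mpr ⟨hj, Finset.mem_univ j⟩)).trans (hbs j hj).symm
    have hc : c = Function.update b i (c i) := by
      funext j
      by_cases hj : j = i
      · subst hj; simp
      · simp [Function.update_of_ne hj, hoff j hj]
    rcases (by decide : ∀ p c : ZMod 2, p = c ∨ p = c + 1) (c i) (b i) with h1 | h1
    · left; rw [hc, h1, Function.update_eq_self]
    · right; rw [hc, h1]
  · rintro (rfl | rfl)
    · exact fun j hj => hbs j (Finset.mem_erase.mp hj).1
    · intro j hj
      rw [Function.update_of_ne (Finset.mem_erase.mp hj).1]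
      exact hbs j (Finset.mem_erase.mp hj).1

lemma marg {n : ℕ} (Q : Box n)
    (h0 : ∀ x a, (∑ j, a j) ≠ ∏ j, x j → Q x a = 0)
    (i : Fin n) (y b aS : Fin n → ZMod 2)
    (hb : ∑ j, b j = ∏ j, y j) (hbs : ∀ j, j ≠ i → b j = aS j) :
    ∑ c ∈ Finset.univ.filter (fun c : Fin n → ZMod 2 => ∀ j ∈ Finset.univ.erase i, c j = aS j),
      Q y c = Q y b := by
  rw [filter_pair i b aS hbs]
  have hne : b ≠ Function.update b i (b i + 1) := by
    intro h
    have := congrFun h i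
    simp at this
  rw [Finset.sum_pair hne]
  have : Q y (Function.update b i (b i + 1)) = 0 := by
    apply h0
    rw [sum_upd, hb]
    generalize ∏ j, y j = p
    generalize b i = u
    revert p u
    decide
  rw [this, add_zero]

lemma step {n : ℕ} (Q : Box n) (hNS : IsNonSignaling Q)
    (h0 : ∀ x a, (∑ j, a j) ≠ ∏ j, x j → Q x a = 0)
    (i : Fin n) (x x' a a' : Fin n → ZMod 2)
    (hx : ∀ j, j ≠ i → x j = x' j) (ha : ∀ j, j ≠ i → a j = a' j)
    (hpa : ∑ j, a j = ∏ j, x j) (hpa' : ∑ j, a' j = ∏ j, x' j) :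
    Q x a = Q x' a' := by
  have h1 := hNS (Finset.univ.erase i) x x'
    (fun j hj => hx j (Finset.mem_erase.mp hj).1) a
  rw [marg Q h0 i x a a hpa (fun _ _ => rfl),
    marg Q h0 i x' a' a hpa' (fun j hj => (ha j hj).symm)] at h1
  exact h1

lemma constB {n : ℕ} (Q : Box n) (hNS : IsNonSignaling Q)
    (h0 : ∀ x a, (∑ j, a j) ≠ ∏ j, x j → Q x a = 0) :
    ∀ (m : ℕ) (a b : Fin n → ZMod 2),
      (Finset.univ.filter fun j => a j ≠ b j).card ≤ m →
      (∑ j, a j) = 1 → (∑ j, b j) = 1 →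
      Q (fun _ => 1) a = Q (fun _ => 1) b := by
  intro m
  induction m with
  | zero =>
    intro a b hc _ _
    have hab : a = b := by
      funext j
      by_contra h
      have hj : j ∈ Finset.univ.filter fun j => a j ≠ b j :=
        Finset.mem_filter.mpr ⟨Finset.mem_univ j, h⟩
      have := Finset.card_pos.mpr ⟨j, hj⟩
      omega
    rw [hab]
  | succ m ih =>
    intro a b hc ha hb
    by_cases hab : a = b
    · rw [hab]
    · have hDne : (Finset.univ.filter fun j => a j ≠ b j).Nonempty := by
        rcases Function.ne_iff.mp hab with ⟨j, hj⟩
        exact ⟨j, Finset.mem_filter.mpr ⟨Finset.mem_univ j, hj⟩⟩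
      have hpar : (((Finset.univ.filter fun j => a j ≠ b j).card : ZMod 2)) = 0 := by
        have h1 : ∑ j, (a j + b j) = 0 := by
          rw [Finset.sum_add_distrib, ha, hb]; decide
        have h2 : ∑ j, (a j + b j) = ∑ j, (if a j ≠ b j then (1 : ZMod 2) else 0) := by
          apply Finset.sum_congr rfl
          intro j _
          by_cases h : a j = b j
          · rw [if_neg (by simpa using h), h]
            exact (by decide : ∀ u : ZMod 2, u + u = 0) _
          · rw [if_pos h]
            exact (by decide : ∀ u v : ZMod 2, u ≠ v → u + v = 1) _ _ h
        rw [h2, Finset.sum_boole] at h1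
        simpa using h1
      have hdvd : 2 ∣ (Finset.univ.filter fun j => a j ≠ b j).card :=
        (ZMod.natCast_eq_zero_iff _ 2).mp hpar
      have hcard2 : 1 < (Finset.univ.filter fun j => a j ≠ b j).card := by
        have := Finset.card_pos.mpr hDne
        omega
      obtain ⟨j, hj, k, hk, hjk⟩ := Finset.one_lt_card.mp hcard2
      have haj : a j ≠ b j := (Finset.mem_filter.mp hj).2
      have hak : a k ≠ b k := (Finset.mem_filter.mp hk).2
      -- pair-flip chain
      set a1 := Function.update a j (a j + 1) with ha1
      set a2 := Function.update a1 k (a1 k + 1) with ha2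
      set x1 := Function.update (fun _ => (1 : ZMod 2)) j 0 with hx1
      set x2 := Function.update x1 k 0 with hx2
      set x3 := Function.update x2 j 1 with hx3
      have hone : (∏ _l : Fin n, (1 : ZMod 2)) = 1 := Finset.prod_const_one
      have hpx1 : ∏ l, x1 l = 0 :=
        Finset.prod_eq_zero (Finset.mem_univ j) (by simp [hx1])
      have hpx2 : ∏ l, x2 l = 0 :=
        Finset.prod_eq_zero (Finset.mem_univ j)
          (by rw [hx2, Function.update_of_ne hjk]; simp [hx1])
      have hpx3 : ∏ l, x3 l = 0 :=
        Finset.prod_eq_zero (Finset.mem_univ k)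
          (by rw [hx3, Function.update_of_ne hjk.symm, hx2]; simp)
      have hlast : Function.update x3 k 1 = fun _ => (1 : ZMod 2) := by
        funext l
        by_cases hlk : l = k
        · subst hlk; simp
        · rw [Function.update_of_ne hlk, hx3]
          by_cases hlj : l = j
          · subst hlj; simp
          · rw [Function.update_of_ne hlj, hx2, Function.update_of_ne hlk, hx1,
              Function.update_of_ne hlj]
      have sa1 : ∑ l, a1 l = 0 := by
        rw [ha1, sum_upd, ha]
        generalize a j = u
        revert u; decide
      have sa2 : ∑ l, a2 l = 1 := by
        rw [ha2, sum_upd, sa1]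
        generalize a1 k = u
        revert u; decide
      have s1 : Q (fun _ => 1) a = Q x1 a1 :=
        step Q hNS h0 j _ x1 a a1
          (fun l hl => by rw [hx1, Function.update_of_ne hl])
          (fun l hl => by rw [ha1, Function.update_of_ne hl])
          (by rw [ha, hone]) (by rw [sa1, hpx1])
      have s2 : Q x1 a1 = Q x2 a1 :=
        step Q hNS h0 k x1 x2 a1 a1
          (fun l hl => by rw [hx2, Function.update_of_ne hl])
          (fun _ _ => rfl) (by rw [sa1, hpx1]) (by rw [sa1, hpx2])
      have s3 : Q x2 a1 = Q x3 a1 :=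
        step Q hNS h0 j x2 x3 a1 a1
          (fun l hl => by rw [hx3, Function.update_of_ne hl])
          (fun _ _ => rfl) (by rw [sa1, hpx2]) (by rw [sa1, hpx3])
      have s4 : Q x3 a1 = Q (fun _ => 1) a2 :=
        step Q hNS h0 k x3 _ a1 a2
          (fun l hl => by
            have h := congrFun hlast l
            rw [Function.update_of_ne hl] at h
            exact h)
          (fun l hl => by rw [ha2, Function.update_of_ne hl])
          (by rw [sa1, hpx3]) (by rw [sa2, hone])
      have hchain : Q (fun _ => 1) a = Q (fun _ => 1) a2 := by
        rw [s1, s2, s3, s4]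
      rw [hchain]
      apply ih a2 b _ sa2 hb
      -- card bound
      have hsub : (Finset.univ.filter fun l => a2 l ≠ b l) ⊆
          (Finset.univ.filter fun l => a l ≠ b l).erase j := by
        intro l hl
        have hl2 : a2 l ≠ b l := (Finset.mem_filter.mp hl).2
        by_cases hlj : l = j
        · exfalso; subst hlj
          apply hl2
          rw [ha2, Function.update_of_ne hjk, ha1, Function.update_self]
          exact ((by decide : ∀ u v : ZMod 2, u ≠ v → v = u + 1) _ _ haj).symm
        · by_cases hlk : l = k
          · exfalso; subst hlk
            apply hl2
            rw [ha2, Function.update_self, ha1, Function.update_of_ne hjk.symm]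
            exact ((by decide : ∀ u v : ZMod 2, u ≠ v → v = u + 1) _ _ hak).symm
          · apply Finset.mem_erase.mpr
            refine ⟨hlj, Finset.mem_filter.mpr ⟨Finset.mem_univ l, ?_⟩⟩
            rwa [ha2, Function.update_of_ne hlk, ha1, Function.update_of_ne hlj] at hl2
      have h1 := Finset.card_le_card hsub
      rw [Finset.card_erase_of_mem hj] at h1
      omega

lemma reachA {n : ℕ} (Q : Box n) (hNS : IsNonSignaling Q)
    (h0 : ∀ x a, (∑ j, a j) ≠ ∏ j, x j → Q x a = 0) :
    ∀ (m : ℕ) (x a : Fin n → ZMod 2),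
      (Finset.univ.filter fun j => x j = 0).card ≤ m →
      (∑ j, a j) = ∏ j, x j →
      ∃ b, (∑ j, b j) = 1 ∧ Q x a = Q (fun _ => 1) b := by
  intro m
  induction m with
  | zero =>
    intro x a hc hp
    have hx : x = fun _ => 1 := by
      funext j
      by_contra h
      have hj0 : x j = 0 := (by decide : ∀ u : ZMod 2, u ≠ 1 → u = 0) _ h
      have hj : j ∈ Finset.univ.filter fun j => x j = 0 :=
        Finset.mem_filter.mpr ⟨Finset.mem_univ j, hj0⟩
      have := Finset.card_pos.mpr ⟨j, hj⟩
      omega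
    subst hx
    exact ⟨a, by rw [hp]; exact Finset.prod_const_one, rfl⟩
  | succ m ih =>
    intro x a hc hp
    by_cases hx : (Finset.univ.filter fun j => x j = 0) = ∅
    · have hx1 : x = fun _ => 1 := by
        funext j
        by_contra h
        have hj0 : x j = 0 := (by decide : ∀ u : ZMod 2, u ≠ 1 → u = 0) _ h
        exact (Finset.notMem_empty j)
          (hx ▸ Finset.mem_filter.mpr ⟨Finset.mem_univ j, hj0⟩)
      subst hx1
      exact ⟨a, by rw [hp]; exact Finset.prod_const_one, rfl⟩
    · obtain ⟨i, hi⟩ := Finset.nonempty_of_ne_empty hx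
      have hxi : x i = 0 := (Finset.mem_filter.mp hi).2
      set x' := Function.update x i 1 with hx'
      set a' := Function.update a i (a i + (∏ j, x' j) + ∏ j, x j) with ha'
      have hpa' : ∑ j, a' j = ∏ j, x' j := by
        rw [ha', sum_upd, hp]
        generalize ∏ j, x j = p
        generalize ∏ j, x' j = p'
        generalize a i = u
        revert p p' u; decide
      have hstep : Q x a = Q x' a' :=
        step Q hNS h0 i x x' a a'
          (fun l hl => by rw [hx', Function.update_of_ne hl])
          (fun l hl => by rw [ha', Function.update_of_ne hl])
          hp hpa'
      have hfilt : (Finset.univ.filter fun j => x' j = 0) =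
          (Finset.univ.filter fun j => x j = 0).erase i := by
        ext l
        simp only [Finset.mem_filter, Finset.mem_univ, true_and, Finset.mem_erase]
        by_cases hli : l = i
        · subst hli
          simp [hx']
        · rw [hx', Function.update_of_ne hli]
          tauto
      have hcard : (Finset.univ.filter fun j => x' j = 0).card ≤ m := by
        rw [hfilt, Finset.card_erase_of_mem hi]
        omega
      obtain ⟨b, hb1, hb2⟩ := ih x' a' hcard hpa'
      exact ⟨b, hb1, hstep.trans hb2⟩

lemma count_parity {n : ℕ} (hn : 1 ≤ n) (c : ZMod 2) :
    (Finset.univ.filter fun a : Fin n → ZMod 2 => (∑ j, a j) = c).card = 2 ^ (n - 1) := by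
  set i0 : Fin n := ⟨0, hn⟩
  have key : ∀ c : ZMod 2,
      (Finset.univ.filter fun a : Fin n → ZMod 2 => (∑ j, a j) = c).card =
      (Finset.univ.filter fun a : Fin n → ZMod 2 => (∑ j, a j) = c + 1).card := by
    intro c
    apply Finset.card_nbij' (fun a => Function.update a i0 (a i0 + 1))
      (fun a => Function.update a i0 (a i0 + 1))
    · intro a ha
      simp only [Finset.coe_filter, Set.mem_setOf_eq, Finset.mem_filter, Finset.mem_univ, true_and] at ha ⊢
      rw [sum_upd, ha]
      exact z2a c _
    · intro a ha
      simp only [Finset.coe_filter, Set.mem_setOf_eq, Finset.mem_filter, Finset.mem_univ, true_and] at ha ⊢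
      rw [sum_upd, ha]
      exact z2b c _
    · intro a _
      simp only [Function.update_idem, Function.update_self]
      rw [z2c, Function.update_eq_self]
    · intro a _
      simp only [Function.update_idem, Function.update_self]
      rw [z2c, Function.update_eq_self]
  have hdisj : Disjoint (Finset.univ.filter fun a : Fin n → ZMod 2 => (∑ j, a j) = c)
      (Finset.univ.filter fun a : Fin n → ZMod 2 => (∑ j, a j) = c + 1) := by
    rw [Finset.disjoint_left]
    intro a ha ha'
    have h1 := (Finset.mem_filter.mp ha).2
    have h2 := (Finset.mem_filter.mp ha').2
    rw [h1] at h2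
    exact (by decide : ∀ c : ZMod 2, ¬ c = c + 1) c h2
  have hunion : (Finset.univ.filter fun a : Fin n → ZMod 2 => (∑ j, a j) = c) ∪
      (Finset.univ.filter fun a : Fin n → ZMod 2 => (∑ j, a j) = c + 1) = Finset.univ := by
    ext a
    simp only [Finset.mem_union, Finset.mem_filter, Finset.mem_univ, true_and, iff_true]
    exact (by decide : ∀ p c : ZMod 2, p = c ∨ p = c + 1) _ c
  have hcu : (Finset.univ : Finset (Fin n → ZMod 2)).card = 2 ^ n := by
    simp [Finset.card_univ]
  have htot := Finset.card_union_of_disjoint hdisj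
  rw [hunion, hcu, ← key c] at htot
  have hpow : 2 ^ n = 2 * 2 ^ (n - 1) := by
    calc 2 ^ n = 2 ^ (n - 1 + 1) := by rw [Nat.sub_add_cancel hn]
    _ = 2 * 2 ^ (n - 1) := by rw [pow_succ]; ring
  generalize hX : (Finset.univ.filter fun a : Fin n → ZMod 2 => (∑ j, a j) = c).card = X at htot ⊢
  generalize hY : (2:ℕ) ^ (n - 1) = Y at hpow ⊢
  generalize hZ : (2:ℕ) ^ n = Z at hpow htot
  clear * - htot hpow
  omega

lemma ns_eq_nPR {n : ℕ} (hn : 1 ≤ n) (Q : Box n) (hQ : IsNSBox Q)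
    (h0 : ∀ x a, (∑ j, a j) ≠ ∏ j, x j → Q x a = 0) : Q = nPR n := by
  obtain ⟨hpos, hnorm, hNS⟩ := hQ
  set i0 : Fin n := ⟨0, hn⟩
  set b0 : Fin n → ZMod 2 := fun j => if j = i0 then 1 else 0 with hb0
  have hb0sum : ∑ j, b0 j = 1 := by
    rw [hb0]
    rw [Finset.sum_ite_eq' Finset.univ i0 (fun _ => (1 : ZMod 2))]
    simp
  have hconst : ∀ x a, (∑ j, a j) = ∏ j, x j → Q x a = Q (fun _ => 1) b0 := by
    intro x a hp
    obtain ⟨b, hb1, hb2⟩ := reachA Q hNS h0 n x a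
      ((Finset.card_filter_le _ _).trans (by simp)) hp
    rw [hb2]
    exact constB Q hNS h0 n b b0 ((Finset.card_filter_le _ _).trans (by simp)) hb1 hb0sum
  have hval : ((2:ℝ) ^ (n-1)) * Q (fun _ => 1) b0 = 1 := by
    have h1 := hnorm (fun _ => 1)
    rw [← Finset.sum_subset
      (Finset.subset_univ (Finset.univ.filter fun a : Fin n → ZMod 2 => (∑ j, a j) = 1))
      (fun a _ ha => h0 _ a (by
        simp only [Finset.mem_filter, Finset.mem_univ, true_and] at ha
        rw [Finset.prod_const_one]
        exact ha))] at h1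
    have h2 : ∀ a ∈ Finset.univ.filter fun a : Fin n → ZMod 2 => (∑ j, a j) = 1,
        Q (fun _ => 1) a = Q (fun _ => 1) b0 := by
      intro a ha
      exact hconst _ a (by
        simp only [Finset.mem_filter, Finset.mem_univ, true_and] at ha
        rw [Finset.prod_const_one]; exact ha)
    rw [Finset.sum_congr rfl h2, Finset.sum_const, count_parity hn 1, nsmul_eq_mul] at h1
    rw [← h1]
    push_cast
    ring
  have hvq : Q (fun _ => 1) b0 = ((2:ℝ) ^ (n-1))⁻¹ :=
    (inv_eq_of_mul_eq_one_right hval).symm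
  funext x a
  unfold nPR FCB
  by_cases hp : (∑ j, a j) = ∏ j, x j
  · rw [if_pos hp, hconst x a hp, hvq]
  · rw [if_neg hp, h0 x a hp]

lemma nPR_box (n : ℕ) (hn : 1 ≤ n) : IsNSBox (nPR n) := by
  refine ⟨?_, ?_, ?_⟩
  · intro x a
    unfold nPR FCB
    split
    · positivity
    · exact le_refl 0
  · intro x
    simp only [nPR, FCB]
    rw [← Finset.sum_filter, Finset.sum_const, count_parity hn, nsmul_eq_mul]
    push_cast
    exact mul_inv_cancel₀ (by positivity)
  · intro S x x' hxx aS
    simp only [nPR, FCB]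
    by_cases hS : S = Finset.univ
    · subst hS
      have hxe : x = x' := funext fun j => hxx j (Finset.mem_univ j)
      rw [hxe]
    · obtain ⟨i0, hi0⟩ : ∃ i, i ∉ S := by
        by_contra h
        push_neg at h
        exact hS (Finset.eq_univ_iff_forall.mpr h)
      set t := (∏ j, x' j) + ∏ j, x j with ht
      have hmem : ∀ (b : Fin n → ZMod 2),
          b ∈ Finset.univ.filter (fun a : Fin n → ZMod 2 => ∀ i ∈ S, a i = aS i) →
          Function.update b i0 (b i0 + t) ∈
            Finset.univ.filter (fun a : Fin n → ZMod 2 => ∀ i ∈ S, a i = aS i) := by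
        intro b hb
        simp only [Finset.mem_filter, Finset.mem_univ, true_and] at hb ⊢
        intro i hiS
        rw [Function.update_of_ne (by rintro rfl; exact hi0 hiS)]
        exact hb i hiS
      have hinv : ∀ (b : Fin n → ZMod 2),
          Function.update (Function.update b i0 (b i0 + t)) i0
            (Function.update b i0 (b i0 + t) i0 + t) = b := by
        intro b
        simp only [Function.update_idem, Function.update_self]
        rw [z2d, Function.update_eq_self]
      apply Finset.sum_nbij' (fun a => Function.update a i0 (a i0 + t))
        (fun a => Function.update a i0 (a i0 + t)) hmem hmem
        (fun a _ => hinv a) (fun a _ => hinv a)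
      intro a _
      rw [sum_upd]
      congr 1
      rw [ht]
      generalize ∏ j, x j = p
      generalize ∏ j, x' j = p'
      generalize ∑ j, a j = s
      generalize a i0 = u
      revert p p' s u
      decide

/-- the n-partite Popescu–Rohrlich box is extremal in the
non-signaling polytope. -/
theorem nPR_extremal (n : ℕ) (hn : 1 ≤ n) : IsExtremalNS (nPR n) := by
  refine ⟨nPR_box n hn, ?_⟩
  intro ε P1 P2 hε0 hε1 h1 h2 hmix
  have hz : ∀ (x a : Fin n → ZMod 2), (∑ j, a j) ≠ ∏ j, x j →
      P1 x a = 0 ∧ P2 x a = 0 := by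
    intro x a hp
    have h0 : nPR n x a = 0 := by simp only [nPR, FCB]; rw [if_neg hp]
    have hmx := hmix x a
    rw [h0] at hmx
    have t1 : 0 ≤ ε * P1 x a := mul_nonneg (le_of_lt hε0) (h1.1 x a)
    have t2 : 0 ≤ (1 - ε) * P2 x a := mul_nonneg (by linarith) (h2.1 x a)
    have e1 : ε * P1 x a = 0 := by linarith
    have e2 : (1 - ε) * P2 x a = 0 := by linarith
    constructor
    · rcases mul_eq_zero.mp e1 with h | h
      · exfalso; linarith
      · exact h
    · rcases mul_eq_zero.mp e2 with h | h
      · exfalso; linarith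
      · exact h
  exact ⟨ns_eq_nPR hn P1 h1 (fun x a hp => (hz x a hp).1),
    ns_eq_nPR hn P2 h2 (fun x a hp => (hz x a hp).2)⟩
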